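/- Suppose 0 ≤ L ≤ L̃ and 0 < R ≤ R̃. Let β = 1/(1 + √(2R̃/L̃)) (i.e., β = g(L̃/R̃) with g(z) = 1/(1 + √(2/z))). Then (−L·ln β + R)/(1 − β) ≤ L + √(2·L̃·R̃) + R. -/

import Mathlib

theorem stmt_3 (L Lt R Rt β : ℝ)
    (hL0 : 0 ≤ L) (hLLt : L ≤ Lt) (hR0 : 0 < R) (hRRt : R ≤ Rt)
    (hβ : β = 1 / (1 + Real.sqrt (2 * Rt / Lt))) :
    (-L * Real.log β + R) / (1 - β) ≤ L + Real.sqrt (2 * Lt * Rt) + R := by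
  have hRt : 0 < Rt := lt_of_lt_of_le hR0 hRRt
  rcases eq_or_lt_of_le (hL0.trans hLLt) with hLt0 | hLt
  · -- Lt = 0 degenerate case
    have hL : L = 0 := le_antisymm (hLLt.trans hLt0.ge) hL0
    have : (2 : ℝ) * Rt / Lt = 0 := by rw [← hLt0]; simp
    rw [hβ, this] at *
    simp [hL]
    positivity
  · set s := Real.sqrt (2 * Rt / Lt) with hs_def
    have hs : 0 < s := Real.sqrt_pos.mpr (by positivity)
    set K := Real.sqrt (2 * Lt * Rt) with hK_def
    have hKpos : 0 < K := Real.sqrt_pos.mpr (by positivity)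
    have hK2 : K ^ 2 = 2 * Lt * Rt := Real.sq_sqrt (by positivity)
    have hK : Lt * s = K := by
      rw [hs_def, hK_def, ← Real.sqrt_sq hLt.le, ← Real.sqrt_mul (by positivity)]
      congr 1
      field_simp
      ring_nf; rw [Real.sq_sqrt (sq_nonneg Lt)]
    have h1s : (0:ℝ) < 1 + s := by linarith
    -- log bound
    have hlog : Real.log (1 + s) ≤ s * (s + 2) / (2 * (1 + s)) := by
      have hu : 0 < Real.log (1 + s) := Real.log_pos (by linarith)
      have hsinh := (Real.self_lt_sinh_iff.mpr hu).le
      rw [Real.sinh_eq, Real.exp_log h1s, Real.exp_neg, Real.exp_log h1s] at hsinh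
      have : ((1 + s) - (1 + s)⁻¹) / 2 = s * (s + 2) / (2 * (1 + s)) := by
        field_simp
        ring
      linarith [this ▸ hsinh]
    -- rewrite LHS
    have hβval : β = 1 / (1 + s) := hβ
    have h1mβ : 1 - β = s / (1 + s) := by
      rw [hβval]; field_simp; ring
    have hlogβ : Real.log β = -Real.log (1 + s) := by
      rw [hβval, one_div, Real.log_inv]
    rw [hlogβ, h1mβ, div_div_eq_mul_div, show -L * -Real.log (1 + s) = L * Real.log (1 + s) by ring]
    have hLHS : (L * Real.log (1 + s) + R) * (1 + s) / s
        ≤ (L * (s * (s + 2) / (2 * (1 + s))) + R) * (1 + s) / s := by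
      gcongr
    refine hLHS.trans ?_
    -- final polynomial inequality
    rw [div_le_iff₀ hs]
    have hLs2 : L * s ^ 2 ≤ K * s := by
      have : L * s ^ 2 ≤ Lt * s ^ 2 := by nlinarith [sq_nonneg s]
      nlinarith [hK]
    have h2R : 2 * R ≤ K * s := by
      have h1 : 2 * R * Lt ≤ K ^ 2 := by nlinarith
      have h2 : K * s * Lt = K ^ 2 := by nlinarith [hK]
      nlinarith [h1, h2, hLt]
    have hexp : (L * (s * (s + 2) / (2 * (1 + s))) + R) * (1 + s)
        = L * s * (s + 2) / 2 + R * (1 + s) := by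
      field_simp
    rw [hexp]
    clear hs_def hK_def hβval hβ h1mβ hlogβ hlog hLHS hK2 hK
    clear_value s K
    nlinarith [hLs2, h2R, hs.le]
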